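/- There exists a normalized positive operator measure F on B([0,2π)) whose number-state distributions are all uniform but which is not phase shift covariant; e.g. F(X) = (2π)^{-1}∫_X dθ · I + (2π)^{-1}∫_X sin θ dθ · (|0⟩⟨1| + |1⟩⟨0|). -/

import Mathlib

open scoped Real
open MeasureTheory ContinuousLinearMap

/-- The cyclically shifted set `X ⊕ θ = {x ∈ [0,2π) | (x − θ) mod 2π ∈ X}`. -/
def shiftSet (X : Set ℝ) (θ : ℝ) : Set ℝ :=
  {x | x ∈ Set.Ico 0 (2 * π) ∧ 2 * π * Int.fract ((x - θ) / (2 * π)) ∈ X}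

set_option linter.unusedSectionVars false
set_option linter.unusedVariables false
set_option maxHeartbeats 1000000

section Aux
variable {H : Type*} [NormedAddCommGroup H] [InnerProductSpace ℂ H] [CompleteSpace H]


noncomputable def Tflip (e : HilbertBasis ℕ ℂ H) : H →L[ℂ] H :=
  ((innerSL ℂ (e 1)).smulRight (e 0)) + ((innerSL ℂ (e 0)).smulRight (e 1))

lemma Tflip_apply (e : HilbertBasis ℕ ℂ H) (x : H) :
    Tflip e x = (inner ℂ (e 1) x : ℂ) • e 0 + (inner ℂ (e 0) x : ℂ) • e 1 := rfl

noncomputable def myF (e : HilbertBasis ℕ ℂ H) (X : Set ℝ) : H →L[ℂ] H :=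
  ((((∫ x in X, (1:ℝ)) / (2*π) : ℝ) : ℂ) • (1 : H →L[ℂ] H))
  + ((((∫ x in X, Real.sin x) / (2*π) : ℝ) : ℂ) • Tflip e)

lemma myF_apply (e : HilbertBasis ℕ ℂ H) (X : Set ℝ) (x : H) :
    myF e X x = ((((∫ x in X, (1:ℝ)) / (2*π) : ℝ) : ℂ) • x)
      + ((((∫ x in X, Real.sin x) / (2*π) : ℝ) : ℂ) • Tflip e x) := rfl

lemma inner_myF (e : HilbertBasis ℕ ℂ H) (X : Set ℝ) (φ ψ : H) :
    (inner ℂ φ (myF e X ψ) : ℂ)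
      = (((∫ x in X, (1:ℝ)) / (2*π) : ℝ) : ℂ) * (inner ℂ φ ψ : ℂ)
        + (((∫ x in X, Real.sin x) / (2*π) : ℝ) : ℂ) * (inner ℂ φ (Tflip e ψ) : ℂ) := by
  rw [myF_apply, inner_add_right, inner_smul_right, inner_smul_right]


lemma Tflip_selfAdjoint (e : HilbertBasis ℕ ℂ H) : IsSelfAdjoint (Tflip e) := by
  rw [ContinuousLinearMap.isSelfAdjoint_iff_isSymmetric]
  intro x y
  simp only [ContinuousLinearMap.coe_coe, Tflip_apply, inner_add_left, inner_add_right,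
    inner_smul_left, inner_smul_right]
  rw [← inner_conj_symm x (e 1), ← inner_conj_symm x (e 0)]
  ring

lemma Tflip_inner_self_bound (e : HilbertBasis ℕ ℂ H) (x : H) :
    |Complex.re (inner ℂ (Tflip e x) x : ℂ)| ≤ ‖x‖ ^ 2 := by
  have hb : ‖(inner ℂ (e 0) x : ℂ)‖ ^ 2 + ‖(inner ℂ (e 1) x : ℂ)‖ ^ 2 ≤ ‖x‖ ^ 2 := by
    have := e.orthonormal.sum_inner_products_le (s := {0, 1}) x
    simpa using this
  have hT : (inner ℂ (Tflip e x) x : ℂ)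
      = star (inner ℂ (e 1) x : ℂ) * (inner ℂ (e 0) x : ℂ)
        + star (inner ℂ (e 0) x : ℂ) * (inner ℂ (e 1) x : ℂ) := by
    simp [Tflip_apply, inner_add_left, inner_smul_left, RCLike.star_def]; ring
  set a := (inner ℂ (e 0) x : ℂ)
  set b := (inner ℂ (e 1) x : ℂ)
  rw [hT]
  have h1 : |Complex.re (star b * a + star a * b)| ≤ ‖star b * a‖ + ‖star a * b‖ := by
    calc |Complex.re (star b * a + star a * b)| ≤ ‖star b * a + star a * b‖ :=
          Complex.abs_re_le_norm _
      _ ≤ ‖star b * a‖ + ‖star a * b‖ := norm_add_le _ _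
  refine h1.trans ?_
  have : ‖star b * a‖ + ‖star a * b‖ = 2 * (‖a‖ * ‖b‖) := by
    rw [norm_mul, norm_mul, norm_star, norm_star]; ring
  rw [this]
  nlinarith [sq_nonneg (‖a‖ - ‖b‖), hb]




-- integral facts
lemma int_one_eq (X : Set ℝ) : (∫ x in X, (1:ℝ)) = (volume X).toReal := by
  rw [setIntegral_const]; simp; rfl

lemma sin_integrableOn : IntegrableOn Real.sin (Set.Ico 0 (2*π)) volume := by
  exact Real.continuous_sin.integrableOn_Icc.mono_set Set.Ico_subset_Icc_self

lemma abs_int_sin_le {X : Set ℝ} (hX : MeasurableSet X) (hsub : X ⊆ Set.Ico 0 (2*π)) :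
    |∫ x in X, Real.sin x| ≤ ∫ x in X, (1:ℝ) := by
  have hint : IntegrableOn Real.sin X volume := sin_integrableOn.mono_set hsub
  calc |∫ x in X, Real.sin x| ≤ ∫ x in X, |Real.sin x| := by
        simpa using norm_integral_le_integral_norm (μ := volume.restrict X) Real.sin
    _ ≤ ∫ x in X, (1:ℝ) := by
        apply setIntegral_mono_on hint.abs (integrableOn_const (ne_of_lt ?_)) hX
        · intro x hx; exact Real.abs_sin_le_one x
        · exact lt_of_le_of_lt (measure_mono hsub) (by rw [Real.volume_Ico]; exact ENNReal.ofReal_lt_top)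

lemma int_sin_Ico_two_pi : (∫ x in Set.Ico 0 (2*π), Real.sin x) = 0 := by
  rw [integral_Ico_eq_integral_Ioo, ← integral_Ioc_eq_integral_Ioo,
    ← intervalIntegral.integral_of_le (by positivity : (0:ℝ) ≤ 2*π)]
  simp [integral_sin, Real.cos_two_pi]

lemma int_sin_Ico_pi : (∫ x in Set.Ico 0 π, Real.sin x) = 2 := by
  rw [integral_Ico_eq_integral_Ioo, ← integral_Ioc_eq_integral_Ioo,
    ← intervalIntegral.integral_of_le Real.pi_pos.le]
  simp [integral_sin, Real.cos_pi]
  norm_num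

lemma int_one_Ico_two_pi : (∫ x in Set.Ico 0 (2*π), (1:ℝ)) = 2*π := by
  rw [int_one_eq]
  simp [Real.volume_Ico, ENNReal.toReal_ofReal (by positivity : (0:ℝ) ≤ 2*π), Real.pi_pos.le]

lemma myF_isPositive (e : HilbertBasis ℕ ℂ H) {X : Set ℝ} (hX : MeasurableSet X)
    (hsub : X ⊆ Set.Ico 0 (2*π)) : (myF e X).IsPositive := by
  set a : ℝ := (∫ x in X, (1:ℝ)) / (2*π) with ha
  set b : ℝ := (∫ x in X, Real.sin x) / (2*π) with hb
  have hpi : (0:ℝ) < 2*π := by positivity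
  have ha0 : 0 ≤ a := by
    apply div_nonneg _ hpi.le
    rw [int_one_eq]; exact ENNReal.toReal_nonneg
  have hba : |b| ≤ a := by
    rw [ha, hb, abs_div, abs_of_pos hpi]
    gcongr
    exact abs_int_sin_le hX hsub
  constructor
  · intro x y
    have hTsym := (ContinuousLinearMap.isSelfAdjoint_iff_isSymmetric.mp
      (Tflip_selfAdjoint e)) x y
    simp only [ContinuousLinearMap.coe_coe] at hTsym ⊢
    have hx : myF e X x = (a:ℂ) • x + (b:ℂ) • Tflip e x := rfl
    have hy : myF e X y = (a:ℂ) • y + (b:ℂ) • Tflip e y := rfl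
    rw [hx, hy, inner_add_left, inner_add_right, inner_smul_left, inner_smul_right,
      inner_smul_left, inner_smul_right, Complex.conj_ofReal, Complex.conj_ofReal, hTsym]
  · intro x
    rw [ContinuousLinearMap.reApplyInnerSelf_apply]
    have hx : myF e X x = (a:ℂ) • x + (b:ℂ) • Tflip e x := rfl
    rw [hx, inner_add_left, inner_smul_left, inner_smul_left, Complex.conj_ofReal,
      Complex.conj_ofReal]
    simp only [map_add, RCLike.re_to_complex]
    have h1 : ((a:ℂ) * inner ℂ x x).re = a * ‖x‖^2 := by
      rw [← inner_self_eq_norm_sq (𝕜 := ℂ) x]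
      simp [Complex.re_ofReal_mul]
    have h2 : ((b:ℂ) * inner ℂ (Tflip e x) x).re = b * ((inner ℂ (Tflip e x) x : ℂ)).re := by
      simp [Complex.re_ofReal_mul]
    rw [h1, h2]
    have hT := Tflip_inner_self_bound e x
    have habs : |b * ((inner ℂ (Tflip e x) x : ℂ)).re| ≤ a * ‖x‖^2 := by
      rw [abs_mul]
      exact mul_le_mul hba hT (abs_nonneg _) ha0
    linarith [neg_abs_le (b * ((inner ℂ (Tflip e x) x : ℂ)).re)]

end Aux


/-- There exists a normalized positive operator measure `F` on `B([0,2π))` whose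
number-state distributions are all uniform, but which is not phase shift covariant
(e.g. `F(X) = (2π)⁻¹∫_X dθ · I + (2π)⁻¹∫_X sin θ dθ · (|0⟩⟨1| + |1⟩⟨0|)`). -/
theorem stmt5 {H : Type*} [NormedAddCommGroup H] [InnerProductSpace ℂ H] [CompleteSpace H]
    (e : HilbertBasis ℕ ℂ H)
    (R : ℝ → (H →L[ℂ] H))
    (hR : ∀ θ : ℝ, ∀ n : ℕ, R θ (e n) = Complex.exp (Complex.I * n * θ) • e n)
    (hRadj : ∀ θ : ℝ, ContinuousLinearMap.adjoint (R θ) = R (-θ)) :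
    ∃ F : Set ℝ → (H →L[ℂ] H),
      -- `F` is a POM: positivity, normalization, weak σ-additivity
      (∀ X : Set ℝ, MeasurableSet X → X ⊆ Set.Ico 0 (2 * π) → (F X).IsPositive) ∧
      F (Set.Ico 0 (2 * π)) = 1 ∧
      (∀ f : ℕ → Set ℝ, (∀ n, MeasurableSet (f n)) →
        (∀ n, f n ⊆ Set.Ico 0 (2 * π)) → Pairwise (Function.onFun Disjoint f) →
        ∀ φ ψ : H, HasSum (fun n => (inner ℂ φ (F (f n) ψ) : ℂ)) (inner ℂ φ (F (⋃ n, f n) ψ))) ∧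
      -- the number-state distributions are uniform
      (∀ n : ℕ, ∀ X : Set ℝ, MeasurableSet X → X ⊆ Set.Ico 0 (2 * π) →
        (inner ℂ (e n) (F X (e n)) : ℂ) = (((volume X).toReal / (2 * π) : ℝ) : ℂ)) ∧
      -- but `F` is not phase shift covariant
      ¬ (∀ X : Set ℝ, MeasurableSet X → X ⊆ Set.Ico 0 (2 * π) → ∀ θ : ℝ,
        (R θ) ∘L (F X) ∘L ContinuousLinearMap.adjoint (R θ) = F (shiftSet X θ)) := by
  refine ⟨myF e, fun X hX hsub => myF_isPositive e hX hsub, ?_, ?_, ?_, ?_⟩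
  · -- normalization
    have hpi : (0:ℝ) < 2*π := by positivity
    unfold myF
    rw [int_one_Ico_two_pi, int_sin_Ico_two_pi]
    rw [div_self hpi.ne']
    norm_num
  · -- sigma additivity
    intro f hm hsub hd φ ψ
    have hU : (⋃ n, f n) ⊆ Set.Ico 0 (2*π) := Set.iUnion_subset hsub
    have hμ : volume (⋃ n, f n) < ⊤ :=
      lt_of_le_of_lt (measure_mono hU) (by rw [Real.volume_Ico]; exact ENNReal.ofReal_lt_top)
    have h1 : IntegrableOn (fun _ => (1:ℝ)) (⋃ n, f n) volume :=
      integrableOn_const hμ.ne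
    have h2 : IntegrableOn Real.sin (⋃ n, f n) volume := sin_integrableOn.mono_set hU
    have s1 := (hasSum_integral_iUnion hm hd h1).div_const (2*π)
    have s2 := (hasSum_integral_iUnion hm hd h2).div_const (2*π)
    have c1 := (s1.mapL Complex.ofRealCLM).mul_right (inner ℂ φ ψ : ℂ)
    have c2 := (s2.mapL Complex.ofRealCLM).mul_right (inner ℂ φ (Tflip e ψ) : ℂ)
    have := c1.add c2
    simp only [inner_myF, Complex.ofRealCLM_apply]
    simpa using this
  · -- uniform distributions
    intro n X hX hsub
    have h := orthonormal_iff_ite.mp e.orthonormal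
    have hself : (inner ℂ (e n) (e n) : ℂ) = 1 := by simp [h, e.orthonormal.1 n]
    have hT : (inner ℂ (e n) (Tflip e (e n)) : ℂ) = 0 := by
      rw [Tflip_apply, inner_add_right, inner_smul_right, inner_smul_right, h, h, h, h]
      rcases n with _ | _ | n <;> norm_num
    rw [inner_myF, hself, hT, int_one_eq]
    push_cast
    ring
  · -- noncovariance
    intro hcov
    have hpi : (0:ℝ) < π := Real.pi_pos
    have h := orthonormal_iff_ite.mp e.orthonormal
    set X := Set.Ico (0:ℝ) π with hXdef
    specialize hcov X measurableSet_Ico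
      (Set.Ico_subset_Ico le_rfl (by linarith)) (π/2)
    set θ : ℝ := π/2 with hθ
    set Y := shiftSet X θ with hY
    set bX : ℝ := (∫ x in X, Real.sin x) / (2*π) with hbX
    set bY : ℝ := (∫ x in Y, Real.sin x) / (2*π) with hbY
    have happ := congrArg (fun T : H →L[ℂ] H => (inner ℂ (e 0) (T (e 1)) : ℂ)) hcov
    simp only [ContinuousLinearMap.comp_apply] at happ
    -- compute LHS
    have hadj1 : (ContinuousLinearMap.adjoint (R θ)) (e 1) =
        Complex.exp (Complex.I * 1 * (-θ)) • e 1 := by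
      rw [hRadj]
      simpa using hR (-θ) 1
    have hT1 : Tflip e (e 1) = e 0 := by
      rw [Tflip_apply]
      simp [h, e.orthonormal.1 1]
    have hF1 : ∀ Z : Set ℝ, myF e Z (e 1)
        = ((((∫ x in Z, (1:ℝ)) / (2*π) : ℝ) : ℂ)) • e 1
          + ((((∫ x in Z, Real.sin x) / (2*π) : ℝ) : ℂ)) • e 0 := by
      intro Z
      rw [myF_apply, hT1]
    have hR0 : R θ (e 0) = e 0 := by
      have := hR θ 0
      simpa using this
    have hR1 : R θ (e 1) = Complex.exp (Complex.I * 1 * θ) • e 1 := by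
      simpa using hR θ 1
    rw [hadj1, _root_.map_smul, hF1, _root_.map_smul, map_add, _root_.map_smul, _root_.map_smul, hR0, hR1] at happ
    rw [hF1] at happ
    simp only [inner_smul_right, inner_add_right, smul_smul] at happ
    rw [h, h] at happ
    norm_num at happ
    rw [show -(Complex.I * (θ:ℂ)) = ((-θ:ℝ):ℂ) * Complex.I by push_cast; ring] at happ
    rw [show ((∫ x in X, Real.sin x :ℝ):ℂ) / (2 * (π:ℂ)) = ((bX:ℝ):ℂ) by
        rw [hbX]; push_cast; ring] at happ
    rw [show ((∫ x in Y, Real.sin x :ℝ):ℂ) / (2 * (π:ℂ)) = ((bY:ℝ):ℂ) by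
        rw [hbY]; push_cast; ring] at happ
    have him := congrArg Complex.im happ
    simp only [Complex.mul_im, Complex.ofReal_im, Complex.ofReal_re,
      Complex.exp_ofReal_mul_I_im, Complex.exp_ofReal_mul_I_re, mul_zero, zero_mul,
      add_zero, zero_add] at him
    rw [Real.sin_neg] at him
    have hbX2 : bX = 1/π := by
      rw [hbX, hXdef, int_sin_Ico_pi]
      field_simp
    rw [hθ, Real.sin_pi_div_two, hbX2] at him
    simp at him
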